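/- There exists a constant C > 0 such that the following holds for all μ > 0, k ∈ ℤ∖{0} and λ ∈ ℝ. Let Θ : [−1,1] → ℂ be twice continuously differentiable with Θ(−1) = Θ(1) = 0, and F ∈ L²(−1,1), satisfying the resolvent equation −μ(Θ''(y) − k²Θ(y)) + ik(y−λ)Θ(y) = F(y) for all y ∈ (−1,1). Then μ^{2/3}|k|^{1/3} ‖Θ'‖_{L²(−1,1)} + (μk²)^{1/3} ‖Θ‖_{L²(−1,1)} + |k| ‖(y−λ)Θ‖_{L²(−1,1)} ≤ C ‖F‖_{L²(−1,1)}. -/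

import Mathlib

open MeasureTheory Set Real

noncomputable section

/-- The `L²` norm on `(-1,1)` of a complex valued function. -/
def L2y (g : ℝ → ℂ) : ℝ := (∫ y in (-1:ℝ)..1, ‖g y‖ ^ 2) ^ ((1:ℝ)/2)

lemma L2y_int_nonneg (g : ℝ → ℂ) : 0 ≤ ∫ y in (-1:ℝ)..1, ‖g y‖ ^ 2 :=
  intervalIntegral.integral_nonneg (by norm_num) fun u _ => sq_nonneg _

lemma L2y_nonneg (g : ℝ → ℂ) : 0 ≤ L2y g := Real.rpow_nonneg (L2y_int_nonneg g) _

lemma L2y_sq (g : ℝ → ℂ) : L2y g ^ 2 = ∫ y in (-1:ℝ)..1, ‖g y‖ ^ 2 := by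
  rw [L2y, ← Real.rpow_natCast (_ ^ ((1:ℝ)/2)) 2, ← Real.rpow_mul (L2y_int_nonneg g)]
  norm_num

lemma cs2 {f g : ℝ → ℝ} (hf : Continuous f) (hg : Continuous g)
    (hf0 : ∀ y, 0 ≤ f y) (hg0 : ∀ y, 0 ≤ g y) :
    ∫ y in (-1:ℝ)..1, f y * g y ≤
      (∫ y in (-1:ℝ)..1, f y ^ 2) ^ ((1:ℝ)/2) * (∫ y in (-1:ℝ)..1, g y ^ 2) ^ ((1:ℝ)/2) := by
  have hle : (-1:ℝ) ≤ 1 := by norm_num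
  rw [intervalIntegral.integral_of_le hle, intervalIntegral.integral_of_le hle,
    intervalIntegral.integral_of_le hle]
  have hpq : Real.HolderConjugate 2 2 := Real.HolderConjugate.two_two
  have hmem : ∀ (h : ℝ → ℝ), Continuous h →
      MemLp h (ENNReal.ofReal 2) (volume.restrict (Ioc (-1:ℝ) 1)) := by
    intro h hc
    obtain ⟨C, hC⟩ :=
      (isCompact_Icc (a := (-1:ℝ)) (b := 1)).exists_bound_of_continuousOn hc.continuousOn
    have hfin : IsFiniteMeasure (volume.restrict (Ioc (-1:ℝ) 1)) := by
      constructor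
      rw [Measure.restrict_apply_univ, Real.volume_Ioc]
      exact ENNReal.ofReal_lt_top
    refine MemLp.of_bound hc.aestronglyMeasurable.restrict C ?_
    rw [ae_restrict_iff' measurableSet_Ioc]
    exact Filter.Eventually.of_forall fun y hy => hC y (Ioc_subset_Icc_self hy)
  have := integral_mul_le_Lp_mul_Lq_of_nonneg (μ := volume.restrict (Ioc (-1:ℝ) 1)) hpq
    (Filter.Eventually.of_forall hf0) (Filter.Eventually.of_forall hg0) (hmem f hf) (hmem g hg)
  simpa [Real.rpow_two] using this

/-- Cauchy-Schwarz for complex products against norms. -/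
lemma cs_norm {f g : ℝ → ℂ} (hf : Continuous f) (hg : Continuous g) :
    ∫ y in (-1:ℝ)..1, ‖f y‖ * ‖g y‖ ≤ L2y f * L2y g := by
  rw [L2y, L2y]
  exact cs2 hf.norm hg.norm (fun y => norm_nonneg _) (fun y => norm_nonneg _)

lemma alg0 (Ee P Q R : ℝ) (hE : 0 ≤ Ee) (hP : 0 ≤ P) (hQ : 0 ≤ Q) (hR : 0 ≤ R)
    (h1 : Q^2 ≤ Ee*P) (h2 : R^2 ≤ Ee*R + Q*P) (h3 : P^2 ≤ 4*(Q*P) + R^2) :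
    Q + P + R ≤ 100*Ee := by
  have s1 : R^2 ≤ Ee^2 + 2*(Q*P) := by nlinarith [sq_nonneg (R - Ee)]
  have s2 : P^2 ≤ 6*(Q*P) + Ee^2 := by nlinarith
  have sP : P ≤ 49*Ee := by
    nlinarith [sq_nonneg (P - 12*Q), sq_nonneg (P - 49*Ee), sq_nonneg (P - 24*Ee)]
  have sQ : Q ≤ 7*Ee := by nlinarith
  have sR : R ≤ 30*Ee := by nlinarith
  linarith

set_option maxHeartbeats 1000000 in
/-- Sharp `L²` resolvent estimate for the linearized operator
`−μ(∂_y² − k²) + ik(y − λ)` in the channel `(-1,1)` with Dirichlet boundary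
conditions, for real spectral parameter `λ`. -/
theorem statement5 :
    ∃ C > (0:ℝ), ∀ (μ : ℝ) (k : ℤ) (lam : ℝ), 0 < μ → k ≠ 0 →
    ∀ (Θ F : ℝ → ℂ),
      ContDiff ℝ 2 Θ →
      Θ (-1) = 0 → Θ 1 = 0 →
      IntegrableOn (fun y => ‖F y‖ ^ 2) (Ioo (-1:ℝ) 1) →
      (∀ y ∈ Ioo (-1:ℝ) 1,
        -(μ : ℂ) * (deriv (deriv Θ) y - (k:ℂ)^2 * Θ y)
          + Complex.I * (k:ℂ) * ((y:ℂ) - (lam:ℂ)) * Θ y = F y) →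
      μ ^ ((2:ℝ)/3) * |(k:ℝ)| ^ ((1:ℝ)/3) * L2y (deriv Θ)
        + (μ * (k:ℝ)^2) ^ ((1:ℝ)/3) * L2y Θ
        + |(k:ℝ)| * L2y (fun y => ((y:ℂ) - (lam:ℂ)) * Θ y)
      ≤ C * L2y F := by
  refine ⟨100, by norm_num, ?_⟩
  intro μ k lam hμ hk Θ F hΘ hb1 hb2 hFint heq
  have hle : (-1:ℝ) ≤ 1 := by norm_num
  -- smoothness
  have h2' : ContDiff ℝ (1+1:ℕ) Θ := by norm_num; exact hΘ
  have h1' : ContDiff ℝ 1 (deriv Θ) := (contDiff_succ_iff_deriv.mp h2').2.2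
  have hc0 : Continuous Θ := hΘ.continuous
  have hc1 : Continuous (deriv Θ) := h1'.continuous
  have hc2 : Continuous (deriv (deriv Θ)) := h1'.continuous_deriv le_rfl
  have hd1 : ∀ y, HasDerivAt Θ (deriv Θ y) y := fun y =>
    ((hΘ.differentiable (by norm_num)) y).hasDerivAt
  have hd2 : ∀ y, HasDerivAt (deriv Θ) (deriv (deriv Θ) y) y := fun y =>
    ((h1'.differentiable one_ne_zero) y).hasDerivAt
  set G : ℝ → ℂ := fun y => -(μ:ℂ) * (deriv (deriv Θ) y - (k:ℂ)^2 * Θ y)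
      + Complex.I*(k:ℂ)*((y:ℂ)-(lam:ℂ))*Θ y with hGdef
  have hcy : Continuous (fun y : ℝ => ((y:ℂ) - (lam:ℂ))) := by
    exact (Complex.continuous_ofReal).sub continuous_const
  have hcG : Continuous G := by
    apply Continuous.add
    · exact continuous_const.mul (hc2.sub (continuous_const.mul hc0))
    · exact (continuous_const.mul hcy).mul hc0
  set A := L2y (deriv Θ) with hAdef
  set B := L2y Θ with hBdef
  set M := L2y (fun y => ((y:ℂ) - (lam:ℂ)) * Θ y) with hMdef
  set Ee := L2y F with hEdef
  have hA0 : 0 ≤ A := L2y_nonneg _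
  have hB0 : 0 ≤ B := L2y_nonneg _
  have hM0 : 0 ≤ M := L2y_nonneg _
  have hE0 : 0 ≤ Ee := L2y_nonneg _
  -- replace F by G
  have hae : ∀ᵐ (y:ℝ) ∂volume, y ∈ Set.uIoc (-1:ℝ) 1 → F y = G y := by
    have h1'' : ∀ᵐ (y:ℝ) ∂volume, y ∉ ({1} : Set ℝ) :=
      measure_eq_zero_iff_ae_notMem.mp (measure_singleton 1)
    filter_upwards [h1''] with y hy hyI
    rw [Set.uIoc_of_le hle] at hyI
    exact (heq y ⟨hyI.1, lt_of_le_of_ne hyI.2 (by simpa using hy)⟩).symm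
  have hEG : Ee = L2y G := by
    rw [hEdef, L2y, L2y]
    congr 1
    apply intervalIntegral.integral_congr_ae
    filter_upwards [hae] with y hy hyI
    rw [hy hyI]
  -- pointwise norms
  have hnM : ∀ y : ℝ, ‖((y:ℂ) - (lam:ℂ)) * Θ y‖ = |y - lam| * ‖Θ y‖ := by
    intro y
    rw [norm_mul]
    congr 1
    rw [show ((y:ℂ) - (lam:ℂ)) = ((y - lam : ℝ) : ℂ) by push_cast; ring]
    exact Complex.norm_real _
  -- conj pointwise
  have hconj : ∀ z : ℂ, z * (starRingEnd ℂ) z = ((‖z‖^2 : ℝ) : ℂ) := by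
    intro z
    rw [Complex.mul_conj, Complex.normSq_eq_norm_sq]
  -- conj continuity
  have hcc0 : Continuous (fun y => (starRingEnd ℂ) (Θ y)) := continuous_star.comp hc0
  have hcc1 : Continuous (fun y => (starRingEnd ℂ) (deriv Θ y)) := continuous_star.comp hc1
  have hds : ∀ y, HasDerivAt (fun t => (starRingEnd ℂ) (Θ t)) ((starRingEnd ℂ) (deriv Θ y)) y := by
    intro y
    exact (hd1 y).star
  -- real integrals
  set IA : ℝ := ∫ y in (-1:ℝ)..1, ‖deriv Θ y‖^2 with hIA
  set IB : ℝ := ∫ y in (-1:ℝ)..1, ‖Θ y‖^2 with hIB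
  set IM : ℝ := ∫ y in (-1:ℝ)..1, (y - lam)^2 * ‖Θ y‖^2 with hIM
  set IW : ℝ := ∫ y in (-1:ℝ)..1, (y - lam) * ‖Θ y‖^2 with hIW
  set IW' : ℝ := ∫ y in (-1:ℝ)..1, (y - lam) * ‖deriv Θ y‖^2 with hIW'
  set JT : ℂ := ∫ y in (-1:ℝ)..1, deriv Θ y * (starRingEnd ℂ) (Θ y) with hJT
  have hA2 : A^2 = IA := L2y_sq _
  have hB2 : B^2 = IB := L2y_sq _
  have hM2 : M^2 = IM := by
    rw [hMdef, L2y_sq]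
    apply intervalIntegral.integral_congr
    intro y _
    simp only [hnM y, mul_pow, sq_abs]
  have hIB0 : 0 ≤ IB := hB2 ▸ sq_nonneg B
  have hIM0 : 0 ≤ IM := hM2 ▸ sq_nonneg M
  -- integrability of various continuous functions
  have ii : ∀ (f : ℝ → ℂ), Continuous f → IntervalIntegrable f volume (-1:ℝ) 1 :=
    fun f hf => hf.intervalIntegrable _ _
  -- first integration by parts
  have ibp1 : (∫ y in (-1:ℝ)..1, deriv (deriv Θ) y * (starRingEnd ℂ) (Θ y))
      = -(∫ y in (-1:ℝ)..1, deriv Θ y * (starRingEnd ℂ) (deriv Θ y)) := by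
    have h := intervalIntegral.integral_deriv_mul_eq_sub (a := (-1:ℝ)) (b := 1)
      (u := deriv Θ) (v := fun t => (starRingEnd ℂ) (Θ t))
      (u' := deriv (deriv Θ)) (v' := fun t => (starRingEnd ℂ) (deriv Θ t))
      (fun x _ => hd2 x) (fun x _ => hds x)
      (ii _ hc2) (ii _ hcc1)
    simp only [hb1, hb2, map_zero, mul_zero, sub_zero] at h
    rw [intervalIntegral.integral_add (ii _ (hc2.fun_mul hcc0)) (ii _ (hc1.fun_mul hcc1))] at h
    linear_combination h
  -- second integration by parts
  have hyd : ∀ t : ℝ, HasDerivAt (fun t : ℝ => ((t:ℂ) - (lam:ℂ))) 1 t := by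
    intro t
    simpa using (Complex.ofRealCLM.hasDerivAt (x := t)).sub_const (lam:ℂ)
  have hvd : ∀ t : ℝ, HasDerivAt (fun t : ℝ => ((t:ℂ) - (lam:ℂ)) * (starRingEnd ℂ) (Θ t))
      ((starRingEnd ℂ) (Θ t) + ((t:ℂ) - (lam:ℂ)) * (starRingEnd ℂ) (deriv Θ t)) t := by
    intro t
    simpa using (hyd t).fun_mul (hds t)
  have ibp2 : (∫ y in (-1:ℝ)..1, deriv (deriv Θ) y * (((y:ℂ) - (lam:ℂ)) * (starRingEnd ℂ) (Θ y)))
      = -JT - (∫ y in (-1:ℝ)..1, ((y:ℂ) - (lam:ℂ)) * (deriv Θ y * (starRingEnd ℂ) (deriv Θ y))) := by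
    have h := intervalIntegral.integral_deriv_mul_eq_sub (a := (-1:ℝ)) (b := 1)
      (u := deriv Θ) (v := fun t => ((t:ℂ) - (lam:ℂ)) * (starRingEnd ℂ) (Θ t))
      (u' := deriv (deriv Θ))
      (v' := fun t => (starRingEnd ℂ) (Θ t) + ((t:ℂ) - (lam:ℂ)) * (starRingEnd ℂ) (deriv Θ t))
      (fun x _ => hd2 x) (fun x _ => hvd x)
      (ii _ hc2) (ii _ (hcc0.add (hcy.mul hcc1)))
    simp only [hb1, hb2, map_zero, mul_zero, sub_zero] at h
    have hptw : ∀ y : ℝ, deriv (deriv Θ) y * (((y:ℂ) - (lam:ℂ)) * (starRingEnd ℂ) (Θ y))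
        + deriv Θ y * ((starRingEnd ℂ) (Θ y) + ((y:ℂ) - (lam:ℂ)) * (starRingEnd ℂ) (deriv Θ y))
        = (deriv (deriv Θ) y * (((y:ℂ) - (lam:ℂ)) * (starRingEnd ℂ) (Θ y))
          + deriv Θ y * (starRingEnd ℂ) (Θ y))
          + ((y:ℂ) - (lam:ℂ)) * (deriv Θ y * (starRingEnd ℂ) (deriv Θ y)) := by
      intro y; ring
    rw [intervalIntegral.integral_congr (fun y _ => hptw y)] at h
    rw [intervalIntegral.integral_add ((ii _ ((hc2.fun_mul (hcy.fun_mul hcc0)).fun_add (hc1.fun_mul hcc0))))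
      (ii _ (hcy.fun_mul (hc1.fun_mul hcc1))),
      intervalIntegral.integral_add (ii _ (hc2.fun_mul (hcy.fun_mul hcc0))) (ii _ (hc1.fun_mul hcc0))] at h
    rw [hJT]
    linear_combination h
  -- continuity auxiliaries for coerced real integrands
  have hca1 : Continuous (fun y : ℝ => (((‖Θ y‖^2 : ℝ)) : ℂ)) :=
    Complex.continuous_ofReal.comp (hc0.norm.pow 2)
  have hca2 : Continuous (fun y : ℝ => ((((y - lam) * ‖Θ y‖^2 : ℝ)) : ℂ)) :=
    Complex.continuous_ofReal.comp (((continuous_id.sub continuous_const)).mul (hc0.norm.pow 2))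
  have hca3 : Continuous (fun y : ℝ => ((((y - lam)^2 * ‖Θ y‖^2 : ℝ)) : ℂ)) :=
    Complex.continuous_ofReal.comp ((((continuous_id.sub continuous_const)).pow 2).mul (hc0.norm.pow 2))
  -- identity 1
  have hJ1 : (∫ y in (-1:ℝ)..1, G y * (starRingEnd ℂ) (Θ y))
      = (μ:ℂ) * ((IA:ℝ):ℂ) + (μ:ℂ)*(k:ℂ)^2*((IB:ℝ):ℂ) + Complex.I*(k:ℂ)*((IW:ℝ):ℂ) := by
    have hpt : ∀ y : ℝ, G y * (starRingEnd ℂ) (Θ y)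
        = -(μ:ℂ) * (deriv (deriv Θ) y * (starRingEnd ℂ) (Θ y))
          + (μ:ℂ)*(k:ℂ)^2 * ((‖Θ y‖^2:ℝ):ℂ)
          + Complex.I*(k:ℂ) * (((y - lam) * ‖Θ y‖^2 : ℝ):ℂ) := by
      intro y
      have h1 : (Θ y) * (starRingEnd ℂ) (Θ y) = ((‖Θ y‖^2:ℝ):ℂ) := hconj _
      have h2 : (((y:ℂ) - (lam:ℂ))) * ((‖Θ y‖^2:ℝ):ℂ) = (((y - lam) * ‖Θ y‖^2 : ℝ):ℂ) := by
        push_cast; ring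
      calc G y * (starRingEnd ℂ) (Θ y)
          = -(μ:ℂ) * (deriv (deriv Θ) y * (starRingEnd ℂ) (Θ y))
            + (μ:ℂ)*(k:ℂ)^2 * (Θ y * (starRingEnd ℂ) (Θ y))
            + Complex.I*(k:ℂ) * (((y:ℂ)-(lam:ℂ)) * (Θ y * (starRingEnd ℂ) (Θ y))) := by
            rw [hGdef]; ring
        _ = _ := by rw [h1, h2]
    rw [intervalIntegral.integral_congr (fun y _ => hpt y),
      intervalIntegral.integral_add
        ((ii _ (continuous_const.fun_mul (hc2.fun_mul hcc0))).add (ii _ (continuous_const.fun_mul hca1)))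
        (ii _ (continuous_const.fun_mul hca2)),
      intervalIntegral.integral_add (ii _ (continuous_const.fun_mul (hc2.fun_mul hcc0)))
        (ii _ (continuous_const.fun_mul hca1)),
      intervalIntegral.integral_const_mul, intervalIntegral.integral_const_mul,
      intervalIntegral.integral_const_mul, ibp1]
    have h3 : (∫ y in (-1:ℝ)..1, deriv Θ y * (starRingEnd ℂ) (deriv Θ y)) = ((IA:ℝ):ℂ) := by
      rw [intervalIntegral.integral_congr (fun y (_ : y ∈ uIcc (-1:ℝ) 1) => hconj (deriv Θ y)),
        intervalIntegral.integral_ofReal]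
    rw [h3, intervalIntegral.integral_ofReal, intervalIntegral.integral_ofReal, ← hIB, ← hIW]
    ring
  -- norm bounds
  have hnG1 : ‖∫ y in (-1:ℝ)..1, G y * (starRingEnd ℂ) (Θ y)‖ ≤ Ee * B := by
    refine le_trans (intervalIntegral.norm_integral_le_integral_norm hle) ?_
    have hn : ∀ y : ℝ, ‖G y * (starRingEnd ℂ) (Θ y)‖ = ‖G y‖ * ‖Θ y‖ := by
      intro y; rw [norm_mul, RCLike.norm_conj]
    rw [intervalIntegral.integral_congr (fun y (_ : y ∈ uIcc (-1:ℝ) 1) => hn y), hEG, hBdef]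
    exact cs_norm hcG hc0
  have key1 : μ * IA ≤ Ee * B := by
    have hre : ((∫ y in (-1:ℝ)..1, G y * (starRingEnd ℂ) (Θ y))).re = μ*IA + μ*(k:ℝ)^2*IB := by
      rw [hJ1]
      simp [Complex.add_re, Complex.mul_re, Complex.mul_im, Complex.I_re, Complex.I_im, pow_two,
        Complex.intCast_re, Complex.intCast_im]
    have h1 : μ*IA + μ*(k:ℝ)^2*IB ≤ Ee*B := by
      rw [← hre]
      refine le_trans (Complex.re_le_norm _) ?_
      exact hnG1
    nlinarith [hIB0, sq_nonneg ((k:ℝ)), hμ.le, mul_nonneg (mul_nonneg hμ.le (sq_nonneg ((k:ℝ)))) hIB0]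
  -- identity 2
  have hJ2 : (∫ y in (-1:ℝ)..1, G y * (((y:ℂ) - (lam:ℂ)) * (starRingEnd ℂ) (Θ y)))
      = (μ:ℂ)*JT + (μ:ℂ)*((IW':ℝ):ℂ) + (μ:ℂ)*(k:ℂ)^2*((IW:ℝ):ℂ) + Complex.I*(k:ℂ)*((IM:ℝ):ℂ) := by
    have hpt : ∀ y : ℝ, G y * (((y:ℂ) - (lam:ℂ)) * (starRingEnd ℂ) (Θ y))
        = -(μ:ℂ) * (deriv (deriv Θ) y * (((y:ℂ) - (lam:ℂ)) * (starRingEnd ℂ) (Θ y)))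
          + (μ:ℂ)*(k:ℂ)^2 * (((y - lam) * ‖Θ y‖^2 : ℝ):ℂ)
          + Complex.I*(k:ℂ) * (((y - lam)^2 * ‖Θ y‖^2 : ℝ):ℂ) := by
      intro y
      have h1 : (Θ y) * (starRingEnd ℂ) (Θ y) = ((‖Θ y‖^2:ℝ):ℂ) := hconj _
      have h2 : (((y:ℂ) - (lam:ℂ))) * ((‖Θ y‖^2:ℝ):ℂ) = (((y - lam) * ‖Θ y‖^2 : ℝ):ℂ) := by
        push_cast; ring
      have h3 : (((y:ℂ) - (lam:ℂ)))^2 * ((‖Θ y‖^2:ℝ):ℂ) = (((y - lam)^2 * ‖Θ y‖^2 : ℝ):ℂ) := by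
        push_cast; ring
      calc G y * (((y:ℂ) - (lam:ℂ)) * (starRingEnd ℂ) (Θ y))
          = -(μ:ℂ) * (deriv (deriv Θ) y * (((y:ℂ) - (lam:ℂ)) * (starRingEnd ℂ) (Θ y)))
            + (μ:ℂ)*(k:ℂ)^2 * (((y:ℂ)-(lam:ℂ)) * (Θ y * (starRingEnd ℂ) (Θ y)))
            + Complex.I*(k:ℂ) * ((((y:ℂ)-(lam:ℂ)))^2 * (Θ y * (starRingEnd ℂ) (Θ y))) := by
            rw [hGdef]; ring
        _ = _ := by rw [h1, h2, h3]
    rw [intervalIntegral.integral_congr (fun y _ => hpt y),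
      intervalIntegral.integral_add
        ((ii _ (continuous_const.fun_mul (hc2.fun_mul (hcy.fun_mul hcc0)))).add
          (ii _ (continuous_const.fun_mul hca2)))
        (ii _ (continuous_const.fun_mul hca3)),
      intervalIntegral.integral_add (ii _ (continuous_const.fun_mul (hc2.fun_mul (hcy.fun_mul hcc0))))
        (ii _ (continuous_const.fun_mul hca2)),
      intervalIntegral.integral_const_mul, intervalIntegral.integral_const_mul,
      intervalIntegral.integral_const_mul, ibp2]
    have h4 : (∫ y in (-1:ℝ)..1, ((y:ℂ) - (lam:ℂ)) * (deriv Θ y * (starRingEnd ℂ) (deriv Θ y)))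
        = ((IW':ℝ):ℂ) := by
      have hpp : ∀ y:ℝ, ((y:ℂ) - (lam:ℂ)) * (deriv Θ y * (starRingEnd ℂ) (deriv Θ y))
          = (((y - lam) * ‖deriv Θ y‖^2 : ℝ):ℂ) := by
        intro y; rw [hconj]; push_cast; ring
      rw [intervalIntegral.integral_congr (fun y (_ : y ∈ uIcc (-1:ℝ) 1) => hpp y),
        intervalIntegral.integral_ofReal]
    rw [h4, intervalIntegral.integral_ofReal, intervalIntegral.integral_ofReal, ← hIW, ← hIM]
    ring
  have hnG2 : ‖∫ y in (-1:ℝ)..1, G y * (((y:ℂ) - (lam:ℂ)) * (starRingEnd ℂ) (Θ y))‖ ≤ Ee * M := by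
    refine le_trans (intervalIntegral.norm_integral_le_integral_norm hle) ?_
    have hn : ∀ y : ℝ, ‖G y * (((y:ℂ) - (lam:ℂ)) * (starRingEnd ℂ) (Θ y))‖
        = ‖G y‖ * ‖((y:ℂ) - (lam:ℂ)) * Θ y‖ := by
      intro y; rw [norm_mul, norm_mul, RCLike.norm_conj, norm_mul]
    rw [intervalIntegral.integral_congr (fun y (_ : y ∈ uIcc (-1:ℝ) 1) => hn y), hEG, hMdef]
    exact cs_norm hcG (hcy.mul hc0)
  have hnJT : ‖JT‖ ≤ A * B := by
    rw [hJT]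
    refine le_trans (intervalIntegral.norm_integral_le_integral_norm hle) ?_
    have hn : ∀ y : ℝ, ‖deriv Θ y * (starRingEnd ℂ) (Θ y)‖ = ‖deriv Θ y‖ * ‖Θ y‖ := by
      intro y; rw [norm_mul, RCLike.norm_conj]
    rw [intervalIntegral.integral_congr (fun y (_ : y ∈ uIcc (-1:ℝ) 1) => hn y), hAdef, hBdef]
    exact cs_norm hc1 hc0
  have key2 : |(k:ℝ)| * IM ≤ Ee * M + μ * (A * B) := by
    have him : ((∫ y in (-1:ℝ)..1, G y * (((y:ℂ) - (lam:ℂ)) * (starRingEnd ℂ) (Θ y)))).im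
        = μ*JT.im + (k:ℝ)*IM := by
      rw [hJ2]
      simp [Complex.add_im, Complex.mul_re, Complex.mul_im, Complex.I_re, Complex.I_im, pow_two,
        Complex.intCast_re, Complex.intCast_im]
    have h5 : (k:ℝ)*IM = ((∫ y in (-1:ℝ)..1, G y * (((y:ℂ) - (lam:ℂ)) * (starRingEnd ℂ) (Θ y)))).im
        - μ*JT.im := by rw [him]; ring
    have h6 : |(k:ℝ)*IM| ≤ Ee * M + μ * (A * B) := by
      rw [h5]
      refine le_trans (abs_sub _ _) ?_
      gcongr
      · refine le_trans (Complex.abs_im_le_norm _) ?_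
        exact hnG2
      · rw [abs_mul, abs_of_nonneg hμ.le]
        gcongr
        refine le_trans (Complex.abs_im_le_norm _) ?_
        exact hnJT
    calc |(k:ℝ)| * IM = |(k:ℝ)*IM| := by rw [abs_mul, abs_of_nonneg hIM0]
      _ ≤ _ := h6
  -- Cauchy-Schwarz for the derivative term
  have csAB : (∫ y in (-1:ℝ)..1, ‖deriv Θ y‖ * ‖Θ y‖) ≤ A * B := by
    rw [hAdef, hBdef]; exact cs_norm hc1 hc0
  -- sup bound
  have hsup : ∀ y ∈ Icc (-1:ℝ) 1, ‖Θ y‖^2 ≤ 2*(A*B) := by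
    intro y hy
    set w : ℝ → ℝ :=
      fun t => (deriv Θ t * (starRingEnd ℂ) (Θ t) + Θ t * (starRingEnd ℂ) (deriv Θ t)).re with hw
    have hdφ : ∀ t : ℝ, HasDerivAt (fun t => (Θ t * (starRingEnd ℂ) (Θ t)).re) (w t) t := by
      intro t
      exact (Complex.reCLM.hasFDerivAt.comp_hasDerivAt t ((hd1 t).mul (hds t)))
    have hcw : Continuous w := Complex.continuous_re.comp ((hc1.mul hcc0).add (hc0.mul hcc1))
    have hFTC : (∫ t in (-1:ℝ)..y, w t)
        = (Θ y * (starRingEnd ℂ) (Θ y)).re - (Θ (-1) * (starRingEnd ℂ) (Θ (-1))).re :=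
      intervalIntegral.integral_eq_sub_of_hasDerivAt (fun t _ => hdφ t)
        (hcw.intervalIntegrable _ _)
    rw [hb1] at hFTC
    simp only [map_zero, mul_zero, zero_mul, Complex.zero_re, sub_zero] at hFTC

    have hwle : ∀ t : ℝ, w t ≤ 2 * (‖deriv Θ t‖ * ‖Θ t‖) := by
      intro t
      have h1 : Θ t * (starRingEnd ℂ) (deriv Θ t)
          = (starRingEnd ℂ) (deriv Θ t * (starRingEnd ℂ) (Θ t)) := by
        rw [map_mul, Complex.conj_conj]; ring
      have h2 : w t = 2 * (deriv Θ t * (starRingEnd ℂ) (Θ t)).re := by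
        simp only [hw]
        rw [h1, Complex.add_re, Complex.conj_re]; ring
      have h3 := Complex.re_le_norm (deriv Θ t * (starRingEnd ℂ) (Θ t))
      have h4 : ‖deriv Θ t * (starRingEnd ℂ) (Θ t)‖ = ‖deriv Θ t‖ * ‖Θ t‖ := by
        rw [norm_mul, RCLike.norm_conj]
      rw [h2]
      rw [h4] at h3
      linarith
    have hci : Continuous (fun t : ℝ => 2 * (‖deriv Θ t‖ * ‖Θ t‖)) :=
      continuous_const.mul (hc1.norm.mul hc0.norm)
    have hm1 : (∫ t in (-1:ℝ)..y, w t) ≤ ∫ t in (-1:ℝ)..y, 2*(‖deriv Θ t‖ * ‖Θ t‖) :=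
      intervalIntegral.integral_mono_on hy.1 (hcw.intervalIntegrable _ _)
        (hci.intervalIntegrable _ _) (fun t _ => hwle t)
    have hm2 : (∫ t in (-1:ℝ)..y, 2*(‖deriv Θ t‖ * ‖Θ t‖))
        ≤ ∫ t in (-1:ℝ)..1, 2*(‖deriv Θ t‖ * ‖Θ t‖) := by
      have hadd := intervalIntegral.integral_add_adjacent_intervals (μ := volume) (a := (-1:ℝ)) (b := y) (c := 1)
        (hci.intervalIntegrable _ _) (hci.intervalIntegrable _ _)
      have hnn : 0 ≤ ∫ t in y..(1:ℝ), 2*(‖deriv Θ t‖ * ‖Θ t‖) :=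
        intervalIntegral.integral_nonneg hy.2 (fun u _ => by positivity)
      linarith
    have hm3 : (∫ t in (-1:ℝ)..1, 2*(‖deriv Θ t‖ * ‖Θ t‖))
        = 2 * ∫ t in (-1:ℝ)..1, ‖deriv Θ t‖ * ‖Θ t‖ :=
      intervalIntegral.integral_const_mul 2 _
    have hφ : ‖Θ y‖^2 = (Θ y * (starRingEnd ℂ) (Θ y)).re := by
      rw [hconj]; exact (Complex.ofReal_re _).symm
    rw [hφ, ← hFTC]
    linarith
  -- localization
  have hk0 : (0:ℝ) < |(k:ℝ)| := abs_pos.mpr (Int.cast_ne_zero.mpr hk)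
  set a : ℝ := μ ^ ((1:ℝ)/3) with hadefa
  set κ : ℝ := |(k:ℝ)| ^ ((1:ℝ)/3) with hκdefκ
  have ha0 : 0 < a := Real.rpow_pos_of_pos hμ _
  have hκ0 : 0 < κ := Real.rpow_pos_of_pos hk0 _
  set δ : ℝ := a / κ with hδdef
  have hδ0 : 0 < δ := div_pos ha0 hκ0
  have hind : (∫ t in (-1:ℝ)..1, (Ioo (lam-δ) (lam+δ)).indicator (fun _ => 2*(A*B)) t)
      ≤ 2*(A*B) * (2*δ) := by
    rw [intervalIntegral.integral_of_le hle,
      MeasureTheory.setIntegral_indicator measurableSet_Ioo, MeasureTheory.setIntegral_const,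
      smul_eq_mul]
    have h1 : volume (Ioc (-1:ℝ) 1 ∩ Ioo (lam-δ) (lam+δ)) ≤ ENNReal.ofReal (2*δ) := by
      refine le_trans (measure_mono inter_subset_right) ?_
      rw [Real.volume_Ioo]
      exact ENNReal.ofReal_le_ofReal (by linarith)
    have h2 : (volume (Ioc (-1:ℝ) 1 ∩ Ioo (lam-δ) (lam+δ))).toReal ≤ 2*δ := by
      refine le_trans (ENNReal.toReal_mono ENNReal.ofReal_ne_top h1) ?_
      rw [ENNReal.toReal_ofReal (by positivity)]
    have hAB : (0:ℝ) ≤ 2*(A*B) := by positivity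
    calc (volume (Ioc (-1:ℝ) 1 ∩ Ioo (lam-δ) (lam+δ))).toReal * (2*(A*B))
        ≤ (2*δ) * (2*(A*B)) := mul_le_mul_of_nonneg_right h2 hAB
      _ = 2*(A*B)*(2*δ) := by ring
  have hptw : ∀ t ∈ Icc (-1:ℝ) 1, ‖Θ t‖^2
      ≤ (Ioo (lam-δ) (lam+δ)).indicator (fun _ => 2*(A*B)) t + δ⁻¹^2 * ((t-lam)^2 * ‖Θ t‖^2) := by
    intro t ht
    by_cases hmem : t ∈ Ioo (lam-δ) (lam+δ)
    · rw [indicator_of_mem hmem]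
      have h1 := hsup t ht
      have h2 : (0:ℝ) ≤ δ⁻¹^2 * ((t-lam)^2 * ‖Θ t‖^2) := by positivity
      linarith
    · rw [indicator_of_notMem hmem, zero_add]
      have hd : δ ≤ |t - lam| := by
        rw [mem_Ioo, not_and_or] at hmem
        rcases hmem with h | h
        · push_neg at h
          have : δ ≤ lam - t := by linarith
          refine le_trans this ?_
          rw [abs_sub_comm]
          exact le_abs_self _
        · push_neg at h
          have : δ ≤ t - lam := by linarith
          exact le_trans this (le_abs_self _)
      have hd2 : δ^2 ≤ (t-lam)^2 := by
        rw [← sq_abs (t-lam)]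
        exact pow_le_pow_left₀ hδ0.le hd 2
      have h0 : (0:ℝ) ≤ ‖Θ t‖^2 := sq_nonneg _
      calc ‖Θ t‖^2 = δ⁻¹^2 * (δ^2 * ‖Θ t‖^2) := by
            field_simp
        _ ≤ δ⁻¹^2 * ((t-lam)^2 * ‖Θ t‖^2) := by
            exact mul_le_mul_of_nonneg_left (mul_le_mul_of_nonneg_right hd2 h0) (by positivity)
  have hloc : IB ≤ 2*(A*B)*(2*δ) + δ⁻¹^2 * IM := by
    have hint1 : IntervalIntegrable ((Ioo (lam-δ) (lam+δ)).indicator (fun _ => 2*(A*B)))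
        volume (-1) 1 := by
      apply MeasureTheory.Integrable.intervalIntegrable
      rw [MeasureTheory.integrable_indicator_iff measurableSet_Ioo]
      apply (integrableOn_const_iff (C := 2*(A*B))).mpr
      right
      rw [Real.volume_Ioo]
      exact ENNReal.ofReal_lt_top
    have hint2 : IntervalIntegrable (fun t : ℝ => δ⁻¹^2 * ((t-lam)^2 * ‖Θ t‖^2)) volume (-1) 1 :=
      (continuous_const.mul
        (((continuous_id.sub continuous_const).pow 2).mul (hc0.norm.pow 2))).intervalIntegrable _ _
    have hm := intervalIntegral.integral_mono_on hle ((hc0.norm.fun_pow 2).intervalIntegrable _ _)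
      (hint1.add hint2) hptw
    rw [intervalIntegral.integral_add hint1 hint2, intervalIntegral.integral_const_mul] at hm
    rw [hIB, hIM]
    linarith [hm, hind]
  -- rpow arithmetic
  have ha3 : a^3 = μ := by
    rw [hadefa, ← Real.rpow_natCast (μ ^ ((1:ℝ)/3)) 3, ← Real.rpow_mul hμ.le]
    norm_num
  have hκ3 : κ^3 = |(k:ℝ)| := by
    rw [hκdefκ, ← Real.rpow_natCast (|(k:ℝ)| ^ ((1:ℝ)/3)) 3, ← Real.rpow_mul (abs_nonneg _)]
    norm_num
  have g1 : μ^((2:ℝ)/3) = a^2 := by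
    rw [hadefa, ← Real.rpow_natCast (μ ^ ((1:ℝ)/3)) 2, ← Real.rpow_mul hμ.le]
    norm_num
  have g3 : (μ*(k:ℝ)^2)^((1:ℝ)/3) = a*κ^2 := by
    rw [Real.mul_rpow hμ.le (sq_nonneg _), ← hadefa]
    congr 1
    rw [← sq_abs (k:ℝ), ← Real.rpow_natCast |(k:ℝ)| 2, ← Real.rpow_mul (abs_nonneg _), hκdefκ,
      ← Real.rpow_natCast (|(k:ℝ)| ^ ((1:ℝ)/3)) 2, ← Real.rpow_mul (abs_nonneg _)]
    norm_num
  -- assemble facts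
  have f1 : a^3 * A^2 ≤ Ee * B := by rw [ha3, hA2]; exact key1
  have f2 : κ^3 * M^2 ≤ Ee*M + a^3*(A*B) := by rw [hκ3, hM2, ha3]; exact key2
  have f3 : B^2 ≤ 2*(A*B)*(2*δ) + δ⁻¹^2 * M^2 := by rw [hB2, hM2]; exact hloc
  have hQ2 : (a^2*κ*A)^2 ≤ Ee*(a*κ^2*B) := by
    calc (a^2*κ*A)^2 = (a*κ^2) * (a^3*A^2) := by ring
      _ ≤ (a*κ^2) * (Ee*B) := by
          exact mul_le_mul_of_nonneg_left f1 (by positivity)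
      _ = Ee*(a*κ^2*B) := by ring
  have hR2 : (κ^3*M)^2 ≤ Ee*(κ^3*M) + (a^2*κ*A)*(a*κ^2*B) := by
    calc (κ^3*M)^2 = κ^3*(κ^3*M^2) := by ring
      _ ≤ κ^3*(Ee*M + a^3*(A*B)) := mul_le_mul_of_nonneg_left f2 (by positivity)
      _ = Ee*(κ^3*M) + (a^2*κ*A)*(a*κ^2*B) := by ring
  have hP2 : (a*κ^2*B)^2 ≤ 4*((a^2*κ*A)*(a*κ^2*B)) + (κ^3*M)^2 := by
    have hstep := mul_le_mul_of_nonneg_left f3 (show (0:ℝ) ≤ a^2*κ^4 by positivity)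
    calc (a*κ^2*B)^2 = (a^2*κ^4)*B^2 := by ring
      _ ≤ (a^2*κ^4)*(2*(A*B)*(2*δ) + δ⁻¹^2 * M^2) := hstep
      _ = 4*((a^2*κ*A)*(a*κ^2*B)) + (κ^3*M)^2 := by
          rw [hδdef]
          field_simp
          ring
  have final := alg0 Ee (a*κ^2*B) (a^2*κ*A) (κ^3*M) hE0
    (by positivity) (by positivity) (by positivity) hQ2 hR2 hP2
  rw [g1, g3, ← hκ3]
  linarith [final]
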